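/- Let Ψ, Φ ∈ ℝ^{m×l} have orthonormal columns {ψ_i} and {φ_i}, let A ∈ ℝ^{m×m} be symmetric, γ ∈ ℝ, and B = ΨᵀAΦ ∈ ℝ^{l×l}. Then the reduced system p' = −B q − γΨᵀ((Φq)·(Ψp)² + (Φq)³), q' = Bᵀ p + γΦᵀ((Ψp)·(Φq)² + (Ψp)³) conserves the reduced Hamiltonian H_r(p,q) = −(1/2)((Ψp)ᵀA(Ψp) + (Φq)ᵀA(Φq)) − (γ/4)Σ_j((Ψp)_j² + (Φq)_j²)², provided Ψ = Φ. -/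

import Mathlib

open Matrix

private lemma hasDerivAt_mulVecAux {m l : ℕ} (M : Matrix (Fin m) (Fin l) ℝ)
    {f : ℝ → Fin l → ℝ} {f' : Fin l → ℝ} {t : ℝ} (hf : HasDerivAt f f' t) :
    HasDerivAt (fun s => M.mulVec (f s)) (M.mulVec f') t := by
  rw [hasDerivAt_pi] at hf ⊢
  intro i
  simpa [Matrix.mulVec, dotProduct] using
    HasDerivAt.fun_sum (fun k (_ : k ∈ Finset.univ) => ((hf k).const_mul (M i k)))

private lemma hasDerivAt_dotAux {n : ℕ} {f g : ℝ → Fin n → ℝ} {f' g' : Fin n → ℝ} {t : ℝ}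
    (hf : HasDerivAt f f' t) (hg : HasDerivAt g g' t) :
    HasDerivAt (fun s => f s ⬝ᵥ g s) (f' ⬝ᵥ g t + f t ⬝ᵥ g') t := by
  rw [hasDerivAt_pi] at hf hg
  have h := HasDerivAt.fun_sum
    (fun i (_ : i ∈ (Finset.univ : Finset (Fin n))) => (hf i).mul (hg i))
  simpa [dotProduct, Finset.sum_add_distrib] using h

private lemma dotcancelAux {l : ℕ} (γ : ℝ) (a b c d : Fin l → ℝ) :
    (0:ℝ) =
    -(1/2) * ((a ⬝ᵥ (fun i => -(b i) - γ * d i) + a ⬝ᵥ (fun i => -(b i) - γ * d i))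
      + (b ⬝ᵥ (fun i => a i + γ * c i) + b ⬝ᵥ (fun i => a i + γ * c i)))
    - γ/4 * (4 * (c ⬝ᵥ (fun i => -(b i) - γ * d i) + d ⬝ᵥ (fun i => a i + γ * c i))) := by
  simp only [dotProduct, Finset.mul_sum, ← Finset.sum_add_distrib,
    ← Finset.sum_neg_distrib, ← Finset.sum_sub_distrib]
  refine (Finset.sum_eq_zero fun i _ => by ring).symm

theorem reduced_nls_hamiltonian_conserved (m l : ℕ) (γ : ℝ)
    (A : Matrix (Fin m) (Fin m) ℝ) (hA : A.IsSymm)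
    (Ψ : Matrix (Fin m) (Fin l) ℝ) (hΨ : Ψᵀ * Ψ = 1)
    (B : Matrix (Fin l) (Fin l) ℝ) (hB : B = Ψᵀ * A * Ψ)
    (p q : ℝ → (Fin l → ℝ))
    (hp : ∀ t, HasDerivAt p (fun i =>
      -(B.mulVec (q t)) i - γ * (Ψᵀ.mulVec (fun j =>
        (Ψ.mulVec (q t)) j * ((Ψ.mulVec (p t)) j) ^ 2 + ((Ψ.mulVec (q t)) j) ^ 3)) i) t)
    (hq : ∀ t, HasDerivAt q (fun i =>
      (Bᵀ.mulVec (p t)) i + γ * (Ψᵀ.mulVec (fun j =>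
        (Ψ.mulVec (p t)) j * ((Ψ.mulVec (q t)) j) ^ 2 + ((Ψ.mulVec (p t)) j) ^ 3)) i) t) :
    ∀ t s : ℝ,
      -(1 / 2) * ((Ψ.mulVec (p t)) ⬝ᵥ A.mulVec (Ψ.mulVec (p t))
            + (Ψ.mulVec (q t)) ⬝ᵥ A.mulVec (Ψ.mulVec (q t)))
          - γ / 4 * ∑ j, (((Ψ.mulVec (p t)) j) ^ 2 + ((Ψ.mulVec (q t)) j) ^ 2) ^ 2 =
        -(1 / 2) * ((Ψ.mulVec (p s)) ⬝ᵥ A.mulVec (Ψ.mulVec (p s))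
            + (Ψ.mulVec (q s)) ⬝ᵥ A.mulVec (Ψ.mulVec (q s)))
          - γ / 4 * ∑ j, (((Ψ.mulVec (p s)) j) ^ 2 + ((Ψ.mulVec (q s)) j) ^ 2) ^ 2 := by
  have hAT : Aᵀ = A := hA
  have hBT : Bᵀ = B := by
    rw [hB, Matrix.transpose_mul, Matrix.transpose_mul, Matrix.transpose_transpose, hAT,
      Matrix.mul_assoc]
  set H : ℝ → ℝ := fun r =>
      -(1 / 2) * ((Ψ.mulVec (p r)) ⬝ᵥ A.mulVec (Ψ.mulVec (p r))
            + (Ψ.mulVec (q r)) ⬝ᵥ A.mulVec (Ψ.mulVec (q r)))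
          - γ / 4 * ∑ j, (((Ψ.mulVec (p r)) j) ^ 2 + ((Ψ.mulVec (q r)) j) ^ 2) ^ 2 with hH
  have hsym : ∀ x y : Fin m → ℝ, x ⬝ᵥ A.mulVec y = y ⬝ᵥ A.mulVec x := fun x y => by
    rw [Matrix.dotProduct_mulVec, ← Matrix.mulVec_transpose, hAT, dotProduct_comm]
  have hred : ∀ x y : Fin l → ℝ,
      (Ψ.mulVec x) ⬝ᵥ A.mulVec (Ψ.mulVec y) = (B.mulVec x) ⬝ᵥ y := fun x y => by
    rw [Matrix.mulVec_mulVec, Matrix.dotProduct_mulVec, ← Matrix.mulVec_transpose,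
      Matrix.transpose_mul, Matrix.mulVec_mulVec, hAT, ← hB]
  have hlift : ∀ (z : Fin m → ℝ) (x : Fin l → ℝ),
      z ⬝ᵥ Ψ.mulVec x = (Ψᵀ.mulVec z) ⬝ᵥ x := fun z x => by
    rw [Matrix.dotProduct_mulVec, ← Matrix.mulVec_transpose]
  have key : ∀ t, HasDerivAt H 0 t := by
    intro t
    set Mv : Fin m → ℝ := fun j =>
      (Ψ.mulVec (p t)) j * ((Ψ.mulVec (q t)) j) ^ 2 + ((Ψ.mulVec (p t)) j) ^ 3 with hMv
    set Nv : Fin m → ℝ := fun j =>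
      (Ψ.mulVec (q t)) j * ((Ψ.mulVec (p t)) j) ^ 2 + ((Ψ.mulVec (q t)) j) ^ 3 with hNv
    set Dp : Fin l → ℝ := fun i => -(B.mulVec (q t)) i - γ * (Ψᵀ.mulVec Nv) i with hDp
    set Dq : Fin l → ℝ := fun i => (Bᵀ.mulVec (p t)) i + γ * (Ψᵀ.mulVec Mv) i with hDq
    have hu : HasDerivAt (fun s => Ψ.mulVec (p s)) (Ψ.mulVec Dp) t :=
      hasDerivAt_mulVecAux Ψ (hp t)
    have hv : HasDerivAt (fun s => Ψ.mulVec (q s)) (Ψ.mulVec Dq) t :=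
      hasDerivAt_mulVecAux Ψ (hq t)
    have hT1 := hasDerivAt_dotAux hu (hasDerivAt_mulVecAux A hu)
    have hT2 := hasDerivAt_dotAux hv (hasDerivAt_mulVecAux A hv)
    have hpi_u := hasDerivAt_pi.mp hu
    have hpi_v := hasDerivAt_pi.mp hv
    have hS := HasDerivAt.fun_sum (fun j (_ : j ∈ (Finset.univ : Finset (Fin m))) =>
      (((hpi_u j).pow 2).add ((hpi_v j).pow 2)).pow 2)
    have hbig := ((hT1.add hT2).const_mul (-(1/2) : ℝ)).sub (hS.const_mul (γ/4))
    convert hbig using 1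
    case e'_4 => rfl
    case e'_5 => rfl
    case e'_8 => rfl
    have hsum : (∑ i : Fin m, ((2:ℕ):ℝ) *
          ((Ψ.mulVec (p t)) i ^ 2 + (Ψ.mulVec (q t)) i ^ 2) ^ (2 - 1) *
          (((2:ℕ):ℝ) * (Ψ.mulVec (p t)) i ^ (2 - 1) * (Ψ.mulVec Dp) i +
            ((2:ℕ):ℝ) * (Ψ.mulVec (q t)) i ^ (2 - 1) * (Ψ.mulVec Dq) i))
        = 4 * (Mv ⬝ᵥ Ψ.mulVec Dp + Nv ⬝ᵥ Ψ.mulVec Dq) := by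
      simp only [hMv, hNv, dotProduct, mul_add, Finset.mul_sum,
        ← Finset.sum_add_distrib]
      refine Finset.sum_congr rfl fun i _ => by push_cast; ring
    rw [hsym (Ψ.mulVec Dp) (Ψ.mulVec (p t)), hsym (Ψ.mulVec Dq) (Ψ.mulVec (q t)),
      hred (p t) Dp, hred (q t) Dq]
    erw [hsum]
    rw [hlift Mv Dp, hlift Nv Dq, hDp, hDq, hBT]
    exact dotcancelAux γ (B.mulVec (p t)) (B.mulVec (q t))
      (Ψᵀ.mulVec Mv) (Ψᵀ.mulVec Nv)
  intro t s
  exact is_const_of_deriv_eq_zero (fun x => (key x).differentiableAt)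
    (fun x => (key x).deriv) t s
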